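/- (Strong coindex bound for Gap Hamming Distance, explicit form.) Let n, k, t ∈ ℕ with k ≥ 5, t ≥ 2, 2k < n, and (k : ℝ) > t/2 + 2·√(t·log t) (natural logarithm). Then there exists a continuous map f from the unit sphere S^t (the set {x ∈ EuclideanSpace ℝ (Fin (t+1)) : ‖x‖ = 1}) into ℝ^({0,1}^n) such that f(x) ∈ |S(GHD_k^n)| and f(−x) = −f(x) for all x ∈ S^t. In particular coind_{ℤ₂}(S(GHD_k^n)) ≥ (1 − o_k(1))·2k. -/

import Mathlib

open scoped Pointwise

/-- The realized simplex `σ_x` of the Gap Hamming Distance sign complex: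
the convex hull of `{e_y : d_H(x,y) ≤ k} ∪ {-e_y : d_H(x,y) ≥ n - k}`. -/
noncomputable def ghdSimplex (n k : ℕ) (x : Fin n → Bool) :
    Set ((Fin n → Bool) → ℝ) :=
  convexHull ℝ
    ({v | ∃ y, hammingDist x y ≤ k ∧ v = Pi.single y (1 : ℝ)} ∪
     {v | ∃ y, n - k ≤ hammingDist x y ∧ v = -Pi.single y (1 : ℝ)})

/-- The crosspolytope realization `|S(GHD_k^n)|`. -/
noncomputable def ghdRealization (n k : ℕ) : Set ((Fin n → Bool) → ℝ) :=
  ⋃ x, (ghdSimplex n k x ∪ -(ghdSimplex n k x))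

open Finset

namespace GhdAux

lemma clamp_neg (s : ℝ) : max (-1) (min 1 (-s)) = -(max (-1) (min 1 s)) := by
  rcases le_total s (-1) with h | h
  · rw [show min 1 (-s) = 1 from min_eq_left (by linarith),
      show max (-1:ℝ) 1 = 1 from max_eq_right (by norm_num),
      show min 1 s = s from min_eq_right (by linarith),
      show max (-1) s = -1 from max_eq_left h]
    norm_num
  · rcases le_total 1 s with h2 | h2
    · rw [show min 1 (-s) = -s from min_eq_right (by linarith),
        show max (-1) (-s) = -1 from max_eq_left (by linarith),
        show min 1 s = 1 from min_eq_left h2,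
        show max (-1:ℝ) 1 = 1 from max_eq_right (by norm_num)]
    · rw [show min 1 (-s) = -s from min_eq_right (by linarith),
        show max (-1) (-s) = -s from max_eq_right (by linarith),
        show min 1 s = s from min_eq_right h2,
        show max (-1) s = s from max_eq_right h]

lemma inf'_neg_eq {ι : Type*} (s : Finset ι) (hs : s.Nonempty) (f : ι → ℝ) :
    (s.inf' hs fun i => -f i) = -(s.sup' hs f) := by
  apply le_antisymm
  · obtain ⟨i, hi, heq⟩ := Finset.exists_mem_eq_sup' hs f
    rw [heq]
    exact Finset.inf'_le (fun i => -f i) hi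
  · rw [Finset.le_inf'_iff]
    intro b hb
    exact neg_le_neg (Finset.le_sup' f hb)

lemma sup'_neg_eq {ι : Type*} (s : Finset ι) (hs : s.Nonempty) (f : ι → ℝ) :
    (s.sup' hs fun i => -f i) = -(s.inf' hs f) := by
  have := inf'_neg_eq s hs (fun i => -f i)
  simp only [neg_neg] at this
  rw [this]
  simp

lemma hamming_compl {n : ℕ} (x y : Fin n → Bool) :
    hammingDist x (fun j => !(y j)) = n - hammingDist x y := by
  classical
  have h1 : ∀ a b : Bool, (a ≠ !b) ↔ a = b := by decide
  have h2 : hammingDist x (fun j => !(y j)) = (Finset.univ.filter fun j => x j = y j).card := by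
    unfold hammingDist
    congr 1
    apply Finset.filter_congr
    intro j _
    simp [h1]
  have h3 : hammingDist x y = (Finset.univ.filter fun j => ¬(x j = y j)).card := by
    unfold hammingDist
    congr 1
  have h4 := Finset.card_filter_add_card_filter_not
    (s := (Finset.univ : Finset (Fin n))) (p := fun j => x j = y j)
  simp only [Finset.card_univ, Fintype.card_fin] at h4
  omega

lemma card_zeros_le {t n : ℕ} (u : EuclideanSpace ℝ (Fin (t+1))) (hu : u ≠ 0)
    (S : Finset (Fin n)) (hS : ∀ j ∈ S, (∑ i, u i * ((j : ℕ) : ℝ) ^ (i : ℕ)) = 0) :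
    S.card ≤ t := by
  classical
  set P : Polynomial ℝ := ∑ i : Fin (t+1), Polynomial.C (u i) * Polynomial.X ^ (i : ℕ) with hPdef
  have hPcoeff : ∀ i : Fin (t+1), P.coeff (i : ℕ) = u i := by
    intro i
    rw [hPdef, Polynomial.finset_sum_coeff]
    rw [Finset.sum_eq_single i]
    · simp
    · intro b _ hb
      rw [Polynomial.coeff_C_mul, Polynomial.coeff_X_pow]
      have h2 : ¬((i : ℕ) = (b : ℕ)) := fun h => hb (Fin.val_injective h.symm)
      simp [h2]
    · simp
  have hPne : P ≠ 0 := by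
    intro h
    apply hu
    ext i
    have := hPcoeff i
    rw [h, Polynomial.coeff_zero] at this
    exact this.symm
  have hdeg : P.natDegree ≤ t := by
    apply Polynomial.natDegree_le_iff_degree_le.2
    refine le_trans (Polynomial.degree_sum_le _ _) ?_
    apply Finset.sup_le
    intro i _
    refine le_trans (Polynomial.degree_C_mul_X_pow_le _ _) ?_
    exact_mod_cast Nat.lt_succ_iff.1 i.isLt
  have hroots : ∀ j ∈ S, ((j : ℕ) : ℝ) ∈ P.roots := by
    intro j hj
    rw [Polynomial.mem_roots hPne]
    rw [Polynomial.IsRoot, hPdef]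
    rw [Polynomial.eval_finset_sum]
    simpa using hS j hj
  have hinj : Set.InjOn (fun j : Fin n => ((j : ℕ) : ℝ)) S := by
    intro a _ b _ hab
    exact Fin.val_injective (Nat.cast_injective hab)
  calc S.card ≤ P.roots.toFinset.card := by
        apply Finset.card_le_card_of_injOn _ _ hinj
        intro j hj
        rw [Finset.mem_coe, Multiset.mem_toFinset]
        exact hroots j hj
    _ ≤ Multiset.card P.roots := Multiset.toFinset_card_le _
    _ ≤ P.natDegree := Polynomial.card_roots' P
    _ ≤ t := hdeg

lemma exists_delta (t n : ℕ) (htn : t + 1 ≤ n) :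
    ∃ δ : ℝ, 0 < δ ∧ ∀ u : EuclideanSpace ℝ (Fin (t+1)), ‖u‖ = 1 →
      ∀ S : Finset (Fin n), (∀ j ∈ S, |∑ i, u i * ((j : ℕ) : ℝ) ^ (i : ℕ)| < δ) →
        S.card ≤ t := by
  classical
  set E := EuclideanSpace ℝ (Fin (t+1)) with hE
  set a : Fin n → E → ℝ := fun j u => ∑ i, u i * ((j : ℕ) : ℝ) ^ (i : ℕ) with ha
  have hacont : ∀ j, Continuous (a j) := by
    intro j
    apply continuous_finset_sum
    intro i _
    exact ((EuclideanSpace.proj i).continuous).mul continuous_const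
  set 𝒮 := (Finset.univ : Finset (Fin n)).powersetCard (t+1) with h𝒮
  have h𝒮ne : 𝒮.Nonempty := Finset.powersetCard_nonempty.2 (by simpa using htn)
  have hSne : ∀ S ∈ 𝒮, S.Nonempty := by
    intro S hS
    rw [Finset.mem_powersetCard] at hS
    rw [← Finset.card_pos, hS.2]
    omega
  set G : E → ℝ := fun u =>
    𝒮.attach.inf' (h𝒮ne.attach) fun S => S.1.sup' (hSne S.1 S.2) fun j => |a j u| with hG
  have hGcont : Continuous G := by
    apply Continuous.finset_inf'_apply
    intro S _
    apply Continuous.finset_sup'_apply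
    intro j _
    exact (hacont j).abs
  have hsne : (Metric.sphere (0 : E) 1).Nonempty :=
    NormedSpace.sphere_nonempty.2 zero_le_one
  obtain ⟨u₀, hu₀mem, hu₀min⟩ :=
    (isCompact_sphere (0 : E) 1).exists_isMinOn hsne hGcont.continuousOn
  have hnorm : ∀ u : E, u ∈ Metric.sphere (0 : E) 1 → ‖u‖ = 1 := by
    intro u hu
    simpa [mem_sphere_zero_iff_norm] using hu
  refine ⟨G u₀, ?_, ?_⟩
  · by_contra hle
    push_neg at hle
    obtain ⟨S, hSmem, hSeq⟩ := Finset.exists_mem_eq_inf' h𝒮ne.attach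
      (fun S : {x // x ∈ 𝒮} => S.1.sup' (hSne S.1 S.2) fun j => |a j u₀|)
    have hzero : ∀ j ∈ S.1, a j u₀ = 0 := by
      intro j hj
      have hGu₀ : G u₀ = S.1.sup' (hSne S.1 S.2) fun j => |a j u₀| := hSeq
      have h1 : |a j u₀| ≤ G u₀ := by
        rw [hGu₀]
        exact Finset.le_sup' (fun j => |a j u₀|) hj
      have := abs_nonneg (a j u₀)
      have : |a j u₀| = 0 := le_antisymm (h1.trans hle) (abs_nonneg _)
      exact abs_eq_zero.1 this
    have hune : u₀ ≠ 0 := by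
      intro h
      have := hnorm u₀ hu₀mem
      rw [h] at this
      simp at this
    have hcard := card_zeros_le u₀ hune S.1 hzero
    have : S.1.card = t + 1 := (Finset.mem_powersetCard.1 S.2).2
    omega
  · intro u hu S hS
    by_contra hcard
    push_neg at hcard
    obtain ⟨S', hS'sub, hS'card⟩ := Finset.exists_subset_card_eq (s := S) (n := t+1) (by omega)
    have hS'mem : S' ∈ 𝒮 := by
      rw [Finset.mem_powersetCard]
      exact ⟨Finset.subset_univ _, hS'card⟩
    have h1 : G u ≤ S'.sup' (hSne S' hS'mem) fun j => |a j u| := by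
      rw [hG]
      exact Finset.inf'_le _ (Finset.mem_attach _ ⟨S', hS'mem⟩)
    have h2 : (S'.sup' (hSne S' hS'mem) fun j => |a j u|) < G u₀ := by
      rw [Finset.sup'_lt_iff]
      intro j hj
      exact hS j (hS'sub hj)
    have h3 := hu₀min (by rw [Metric.mem_sphere, dist_zero_right]; exact hu)
    simp only [Set.mem_setOf_eq] at h3
    linarith [h1.trans_lt h2]


end GhdAux


set_option maxHeartbeats 1000000 in
/-- Strong coindex bound for Gap Hamming Distance (explicit form): if
`k > t/2 + 2√(t log t)` then there is a ℤ₂-equivariant continuous map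
`S^t → |S(GHD_k^n)|`, i.e. `coind_{ℤ₂}(S(GHD_k^n)) ≥ (1 - o_k(1))·2k`. -/
theorem ghd_coindex_strong (n k t : ℕ) (hk : 5 ≤ k) (ht : 2 ≤ t)
    (hn : 2 * k < n)
    (hkt : (t : ℝ) / 2 + 2 * Real.sqrt (t * Real.log t) < k) :
    ∃ f : EuclideanSpace ℝ (Fin (t + 1)) → ((Fin n → Bool) → ℝ),
      ContinuousOn f (Metric.sphere (0 : EuclideanSpace ℝ (Fin (t + 1))) 1) ∧
      (∀ x ∈ Metric.sphere (0 : EuclideanSpace ℝ (Fin (t + 1))) 1,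
        f x ∈ ghdRealization n k) ∧
      (∀ x ∈ Metric.sphere (0 : EuclideanSpace ℝ (Fin (t + 1))) 1,
        f (-x) = -f x) := by
  classical
  have hn0 : 0 < n := by omega
  have hFinNe : (Finset.univ : Finset (Fin n)).Nonempty := ⟨⟨0, hn0⟩, Finset.mem_univ _⟩
  have hsqrt : (0:ℝ) ≤ Real.sqrt (t * Real.log t) := Real.sqrt_nonneg _
  have ht2kR : (t : ℝ) < 2 * k := by
    have h2 : ((2:ℝ) * k) = ((2 * k : ℕ) : ℝ) := by push_cast; ring
    linarith
  have ht2k : t ≤ 2 * k := by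
    have : (t : ℝ) < ((2 * k : ℕ) : ℝ) := by push_cast; linarith
    exact le_of_lt (by exact_mod_cast this)
  have htn : t + 1 ≤ n := by omega
  obtain ⟨δ, hδ, hband⟩ := GhdAux.exists_delta t n htn
  set p : Fin n → EuclideanSpace ℝ (Fin (t+1)) → ℝ :=
    fun j u => max (-1) (min 1 ((∑ i, u i * ((j : ℕ) : ℝ) ^ (i : ℕ)) / δ)) with hp
  have hpm1 : ∀ j u, -1 ≤ p j u := fun j u => le_max_left _ _
  have hp1 : ∀ j u, p j u ≤ 1 := fun j u => max_le (by norm_num) (min_le_left _ _)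
  have hpodd : ∀ j u, p j (-u) = -(p j u) := by
    intro j u
    have hsum : (∑ i, (-u) i * ((j:ℕ):ℝ) ^ (i:ℕ)) = -(∑ i, u i * ((j:ℕ):ℝ) ^ (i:ℕ)) := by
      rw [← Finset.sum_neg_distrib]
      apply Finset.sum_congr rfl
      intro i _
      rw [PiLp.neg_apply]
      ring
    show max (-1) (min 1 ((∑ i, (-u) i * ((j : ℕ) : ℝ) ^ (i : ℕ)) / δ))
        = -(max (-1) (min 1 ((∑ i, u i * ((j : ℕ) : ℝ) ^ (i : ℕ)) / δ)))
    rw [hsum, neg_div]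
    exact GhdAux.clamp_neg _
  have hpcont : ∀ j, Continuous fun u => p j u := by
    intro j
    apply Continuous.max continuous_const
    apply Continuous.min continuous_const
    apply Continuous.div_const
    apply continuous_finset_sum
    intro i _
    exact ((EuclideanSpace.proj i).continuous).mul continuous_const
  set A : (Fin n → Bool) → EuclideanSpace ℝ (Fin (t+1)) → ℝ :=
    fun y u => Finset.univ.inf' hFinNe fun j => if y j then p j u else 1 with hA
  set B : (Fin n → Bool) → EuclideanSpace ℝ (Fin (t+1)) → ℝ :=
    fun y u => Finset.univ.sup' hFinNe fun j => if y j then (-1:ℝ) else p j u with hB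
  set L : (Fin n → Bool) → EuclideanSpace ℝ (Fin (t+1)) → ℝ :=
    fun y u => max 0 (A y u - B y u) with hL
  set cp : (Fin n → Bool) → (Fin n → Bool) := fun y j => !(y j) with hcp
  have hcpcp : ∀ y, cp (cp y) = y := by
    intro y; funext j; simp [hcp]
  have hAodd : ∀ y u, A y (-u) = -(B (cp y) u) := by
    intro y u
    have h1 : (fun j => if y j then p j (-u) else 1)
        = fun j => -(if (cp y) j then (-1:ℝ) else p j u) := by
      funext j
      rcases Bool.eq_false_or_eq_true (y j) with hyj | hyj <;>
        simp [hcp, hyj, hpodd j u]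
    show Finset.univ.inf' hFinNe (fun j => if y j then p j (-u) else 1) = _
    rw [h1, GhdAux.inf'_neg_eq]
  have hBodd : ∀ y u, B y (-u) = -(A (cp y) u) := by
    intro y u
    have h1 : (fun j => if y j then (-1:ℝ) else p j (-u))
        = fun j => -(if (cp y) j then p j u else 1) := by
      funext j
      rcases Bool.eq_false_or_eq_true (y j) with hyj | hyj <;>
        simp [hcp, hyj, hpodd j u]
    show Finset.univ.sup' hFinNe (fun j => if y j then (-1:ℝ) else p j (-u)) = _
    rw [h1, GhdAux.sup'_neg_eq]
  have hLodd : ∀ y u, L y (-u) = L (cp y) u := by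
    intro y u
    show max 0 (A y (-u) - B y (-u)) = max 0 (A (cp y) u - B (cp y) u)
    rw [hAodd, hBodd]
    congr 1
    ring
  have hAle : ∀ y u j, y j = true → A y u ≤ p j u := by
    intro y u j hj
    have h : A y u ≤ (if y j = true then p j u else 1) :=
      Finset.inf'_le _ (Finset.mem_univ j)
    rw [hj] at h
    simpa using h
  have hBge : ∀ y u j, y j = false → p j u ≤ B y u := by
    intro y u j hj
    have h : (if y j = true then (-1:ℝ) else p j u) ≤ B y u :=
      Finset.le_sup' (fun j' => if y j' = true then (-1:ℝ) else p j' u) (Finset.mem_univ j)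
    rw [hj] at h
    simpa using h
  have hA1 : ∀ y u, A y u ≤ 1 := by
    intro y u
    have h := Finset.inf'_le (fun j => if y j then p j u else 1)
      (Finset.mem_univ (⟨0, hn0⟩ : Fin n))
    refine h.trans ?_
    split
    · exact hp1 _ u
    · exact le_refl 1
  have hBm1 : ∀ y u, -1 ≤ B y u := by
    intro y u
    have h := Finset.le_sup' (fun j => if y j then (-1:ℝ) else p j u)
      (Finset.mem_univ (⟨0, hn0⟩ : Fin n))
    refine le_trans ?_ h
    split
    · exact le_refl _
    · exact hpm1 _ u
  set g : (Fin n → Bool) → ((Fin n → Bool) → ℝ) :=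
    fun y => Pi.single y (1:ℝ) with hg
  refine ⟨fun u => ∑ y : Fin n → Bool,
    (L y u / 4) • (g y - g (cp y)), ?_, ?_, ?_⟩
  · -- continuity
    apply Continuous.continuousOn
    apply continuous_finset_sum
    intro y _
    refine Continuous.fun_smul ?_ continuous_const
    apply Continuous.div_const
    apply Continuous.max continuous_const
    apply Continuous.sub
    · apply Continuous.finset_inf'_apply
      intro j _
      by_cases hyj : y j = true
      · simpa [hyj] using hpcont j
      · simpa [hyj] using (continuous_const : Continuous fun _ => (1:ℝ))
    · apply Continuous.finset_sup'_apply
      intro j _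
      by_cases hyj : y j = true
      · simpa [hyj] using (continuous_const : Continuous fun _ => (-1:ℝ))
      · simpa [hyj] using hpcont j
  · -- membership
    intro u hu
    have hu1 : ‖u‖ = 1 := by rwa [Metric.mem_sphere, dist_zero_right] at hu
    have hmono : ∀ y : Fin n → Bool, ∀ τ : ℝ, τ ∈ Set.Ico (B y u) (A y u) →
        ∀ j, (y j = true ↔ τ < p j u) := by
      intro y τ hτ j
      constructor
      · intro hj
        exact lt_of_lt_of_le hτ.2 (hAle y u j hj)
      · intro hlt
        by_contra hfalse
        have hyf : y j = false := by
          revert hfalse; cases y j <;> simp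
        have h1 := hBge y u j hyf
        have h2 := hτ.1
        linarith
    have hsum2 : ∑ y : Fin n → Bool, L y u = 2 := by
      have hdisj : (↑(Finset.univ : Finset (Fin n → Bool)) : Set (Fin n → Bool)).PairwiseDisjoint
          (fun y => Set.Ico (B y u) (A y u)) := by
        intro y _ y' _ hne
        rw [Function.onFun, Set.disjoint_left]
        intro τ h1 h2
        apply hne
        funext j
        have e1 := hmono y τ h1 j
        have e2 := hmono y' τ h2 j
        by_cases hτp : τ < p j u
        · rw [e1.mpr hτp, e2.mpr hτp]
        · have hy : y j ≠ true := fun h => hτp (e1.mp h)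
          have hy' : y' j ≠ true := fun h => hτp (e2.mp h)
          simp only [Bool.not_eq_true] at hy hy'
          rw [hy, hy']
      have hunion : (⋃ y ∈ (Finset.univ : Finset (Fin n → Bool)), Set.Ico (B y u) (A y u))
          = Set.Ico (-1 : ℝ) 1 := by
        apply Set.Subset.antisymm
        · intro τ hτ
          simp only [Set.mem_iUnion] at hτ
          obtain ⟨y, _, hτ⟩ := hτ
          exact ⟨le_trans (hBm1 y u) hτ.1, lt_of_lt_of_le hτ.2 (hA1 y u)⟩
        · intro τ hτ
          simp only [Set.mem_iUnion]
          refine ⟨fun j => decide (τ < p j u), Finset.mem_univ _, ?_, ?_⟩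
          · show B _ u ≤ τ
            rw [hB]
            rw [Finset.sup'_le_iff]
            intro j _
            by_cases hlt : τ < p j u
            · simpa [hlt] using hτ.1
            · simpa [hlt] using le_of_not_gt hlt
          · show τ < A _ u
            rw [hA]
            rw [Finset.lt_inf'_iff]
            intro j _
            by_cases hlt : τ < p j u
            · simpa [hlt] using hlt
            · simpa [hlt] using hτ.2
      have hmeas := MeasureTheory.measure_biUnion_finset (μ := MeasureTheory.volume) hdisj
        (fun y _ => measurableSet_Ico)
      rw [hunion] at hmeas
      rw [Real.volume_Ico] at hmeas
      have hvolsum : ∑ y : Fin n → Bool, ENNReal.ofReal (A y u - B y u)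
          = ENNReal.ofReal (1 - (-1)) := by
        calc ∑ y : Fin n → Bool, ENNReal.ofReal (A y u - B y u)
            = ∑ y : Fin n → Bool, MeasureTheory.volume (Set.Ico (B y u) (A y u)) :=
              Finset.sum_congr rfl (fun y _ => (Real.volume_Ico).symm)
          _ = ENNReal.ofReal (1 - (-1)) := hmeas.symm
      have htoReal : ∀ y : Fin n → Bool, L y u = (ENNReal.ofReal (A y u - B y u)).toReal := by
        intro y
        show max 0 (A y u - B y u) = _
        rcases le_or_gt (A y u - B y u) 0 with h | h
        · rw [ENNReal.ofReal_eq_zero.2 h, max_eq_left h]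
          simp
        · rw [ENNReal.toReal_ofReal h.le, max_eq_right h.le]
      calc ∑ y : Fin n → Bool, L y u
          = ∑ y : Fin n → Bool, (ENNReal.ofReal (A y u - B y u)).toReal :=
            Finset.sum_congr rfl fun y _ => htoReal y
        _ = (∑ y : Fin n → Bool, ENNReal.ofReal (A y u - B y u)).toReal :=
            (ENNReal.toReal_sum fun y _ => ENNReal.ofReal_ne_top).symm
        _ = (ENNReal.ofReal (1 - (-1))).toReal := by rw [hvolsum]
        _ = 2 := by rw [ENNReal.toReal_ofReal (by norm_num)]; norm_num
    set P := Finset.univ.filter (fun j : Fin n => -1 < p j u ∧ p j u < 1) with hPdef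
    have hPmem : ∀ j ∈ P, -1 < p j u ∧ p j u < 1 := by
      intro j hj
      rw [hPdef, Finset.mem_filter] at hj
      exact hj.2
    have hPcard : P.card ≤ t := by
      apply hband u hu1
      intro j hj
      obtain ⟨hj1, hj2⟩ := hPmem j hj
      set b := (∑ i, u i * ((j:ℕ):ℝ) ^ (i:ℕ)) with hb
      have hpj : p j u = max (-1) (min 1 (b / δ)) := rfl
      have h1 : b / δ < 1 := by
        by_contra hge
        push_neg at hge
        rw [hpj, min_eq_left hge, max_eq_right (by norm_num : (-1:ℝ) ≤ 1)] at hj2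
        exact lt_irrefl 1 hj2
      have h2 : -1 < b / δ := by
        by_contra hle
        push_neg at hle
        rw [hpj, min_eq_right (by linarith), max_eq_left hle] at hj1
        exact lt_irrefl (-1) hj1
      rw [abs_lt]
      constructor
      · have := (lt_div_iff₀ hδ).1 h2
        linarith
      · exact (div_lt_one hδ).1 h1
    set s := P.card with hs
    set m₀ := s - k with hm₀
    have hsk : s ≤ 2 * k := le_trans hPcard ht2k
    have hm₀k : m₀ ≤ k := by omega
    set R : Fin n → ℕ :=
      fun j => (P.filter fun i => p i u < p j u ∨ (p i u = p j u ∧ i ≤ j)).card with hR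
    have hRmono : ∀ i ∈ P, ∀ j ∈ P,
        (p i u < p j u ∨ (p i u = p j u ∧ i < j)) → R i < R j := by
      intro i hi j hj hij
      apply Finset.card_lt_card
      rw [Finset.ssubset_iff_subset_ne]
      constructor
      · intro l hl
        rw [Finset.mem_filter] at hl ⊢
        obtain ⟨hlP, hl2⟩ := hl
        refine ⟨hlP, ?_⟩
        rcases hij with hcase | ⟨heq, hlt⟩
        · rcases hl2 with h | ⟨h, _⟩
          · exact Or.inl (h.trans hcase)
          · exact Or.inl (h ▸ hcase)
        · rcases hl2 with h | ⟨h, h'⟩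
          · exact Or.inl (heq ▸ h)
          · exact Or.inr ⟨h.trans heq, h'.trans hlt.le⟩
      · intro hEq
        have hjj : j ∈ P.filter fun l => p l u < p j u ∨ (p l u = p j u ∧ l ≤ j) := by
          rw [Finset.mem_filter]; exact ⟨hj, Or.inr ⟨rfl, le_refl j⟩⟩
        rw [← hEq, Finset.mem_filter] at hjj
        rcases hjj.2 with h | ⟨heq', hle⟩
        · rcases hij with h2 | ⟨h2, _⟩
          · linarith
          · rw [h2] at h; exact lt_irrefl _ h
        · rcases hij with h2 | ⟨h2, h3⟩
          · rw [heq'] at h2; exact lt_irrefl _ h2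
          · exact absurd h3 (not_lt.2 hle)
    have hRinj : ∀ i ∈ P, ∀ j ∈ P, R i = R j → i = j := by
      intro i hi j hj heq
      by_contra hne
      rcases lt_trichotomy (p i u) (p j u) with h | h | h
      · exact absurd heq (Nat.ne_of_lt (hRmono i hi j hj (Or.inl h)))
      · rcases lt_trichotomy i j with h2 | h2 | h2
        · exact absurd heq (Nat.ne_of_lt (hRmono i hi j hj (Or.inr ⟨h, h2⟩)))
        · exact hne h2
        · exact absurd heq.symm (Nat.ne_of_lt (hRmono j hj i hi (Or.inr ⟨h.symm, h2⟩)))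
      · exact absurd heq.symm (Nat.ne_of_lt (hRmono j hj i hi (Or.inl h)))
    have hR1 : ∀ j ∈ P, 1 ≤ R j := by
      intro j hj
      have : 0 < R j := by
        apply Finset.card_pos.2
        exact ⟨j, by rw [Finset.mem_filter]; exact ⟨hj, Or.inr ⟨rfl, le_refl j⟩⟩⟩
      omega
    have hRs : ∀ j, R j ≤ s := fun j => Finset.card_le_card (Finset.filter_subset _ _)
    have hlowcard : (P.filter fun j => R j ≤ m₀).card ≤ m₀ := by
      calc (P.filter fun j => R j ≤ m₀).card ≤ (Finset.Icc 1 m₀).card := by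
            apply Finset.card_le_card_of_injOn R
            · intro j hj
              rw [Finset.mem_coe, Finset.mem_filter] at hj
              rw [Finset.mem_coe, Finset.mem_Icc]
              exact ⟨hR1 j hj.1, hj.2⟩
            · intro i hi j hj hij
              rw [Finset.coe_filter, Set.mem_setOf_eq] at hi hj
              exact hRinj i hi.1 j hj.1 hij
        _ = m₀ := by rw [Nat.card_Icc]; omega
    have hhighcard : (P.filter fun j => m₀ < R j).card ≤ k := by
      calc (P.filter fun j => m₀ < R j).card ≤ (Finset.Icc (m₀+1) s).card := by
            apply Finset.card_le_card_of_injOn R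
            · intro j hj
              rw [Finset.mem_coe, Finset.mem_filter] at hj
              rw [Finset.mem_coe, Finset.mem_Icc]
              exact ⟨hj.2, hRs j⟩
            · intro i hi j hj hij
              rw [Finset.coe_filter, Set.mem_setOf_eq] at hi hj
              exact hRinj i hi.1 j hj.1 hij
        _ = s - m₀ := by rw [Nat.card_Icc]; omega
        _ ≤ k := by omega
    set x : Fin n → Bool :=
      fun j => if 1 ≤ p j u then true else if p j u ≤ -1 then false
        else decide (m₀ < R j) with hx
    have hxP : ∀ j ∈ P, x j = decide (m₀ < R j) := by
      intro j hj
      obtain ⟨h1, h2⟩ := hPmem j hj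
      show (if 1 ≤ p j u then true else if p j u ≤ -1 then false
        else decide (m₀ < R j)) = decide (m₀ < R j)
      rw [if_neg (by linarith), if_neg (by linarith)]
    have hnear : ∀ y : Fin n → Bool, B y u < A y u → hammingDist x y ≤ k := by
      intro y hy
      set D := Finset.univ.filter (fun j => x j ≠ y j) with hD
      have hdef : hammingDist x y = D.card := by
        rw [hD]; unfold hammingDist; congr 1
      have hDP : D ⊆ P := by
        intro j hj
        rw [hD, Finset.mem_filter] at hj
        obtain ⟨-, hne⟩ := hj
        rw [hPdef, Finset.mem_filter]
        refine ⟨Finset.mem_univ _, ?_⟩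
        by_contra hnot
        rw [not_and_or] at hnot
        rcases hnot with hnot | hnot
        · push_neg at hnot
          have hxj : x j = false := by
            show (if 1 ≤ p j u then true else if p j u ≤ -1 then false
              else decide (m₀ < R j)) = false
            rw [if_neg (by linarith), if_pos hnot]
          have hyj : y j = false := by
            by_contra hyt
            have hyt : y j = true := by revert hyt; cases y j <;> simp
            have e1 := hAle y u j hyt
            have e2 := hBm1 y u
            linarith
          rw [hxj, hyj] at hne; exact hne rfl
        · push_neg at hnot
          have hxj : x j = true := by
            show (if 1 ≤ p j u then true else if p j u ≤ -1 then false
              else decide (m₀ < R j)) = true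
            rw [if_pos hnot]
          have hyj : y j = true := by
            by_contra hyf
            have hyf : y j = false := by revert hyf; cases y j <;> simp
            have e1 := hBge y u j hyf
            have e2 := hA1 y u
            linarith
          rw [hxj, hyj] at hne; exact hne rfl
      have hsplit : (∀ j ∈ D, R j ≤ m₀) ∨ (∀ j ∈ D, m₀ < R j) := by
        by_contra hcon
        rw [not_or] at hcon
        obtain ⟨hc1, hc2⟩ := hcon
        push_neg at hc1 hc2
        obtain ⟨j₁, hj₁D, hj₁⟩ := hc1
        obtain ⟨j₂, hj₂D, hj₂⟩ := hc2
        have hj₁P := hDP hj₁D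
        have hj₂P := hDP hj₂D
        have hx₁ : x j₁ = true := by
          rw [hxP j₁ hj₁P]; simpa using hj₁
        have hx₂ : x j₂ = false := by
          rw [hxP j₂ hj₂P]; simpa using hj₂
        have hne₁ := (Finset.mem_filter.1 hj₁D).2
        have hne₂ := (Finset.mem_filter.1 hj₂D).2
        have hy₁ : y j₁ = false := by
          rw [hx₁] at hne₁; revert hne₁; cases y j₁ <;> simp
        have hy₂ : y j₂ = true := by
          rw [hx₂] at hne₂; revert hne₂; cases y j₂ <;> simp
        have e1 := hBge y u j₁ hy₁
        have e2 := hAle y u j₂ hy₂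
        have hplt : p j₁ u < p j₂ u := by linarith
        have := hRmono j₁ hj₁P j₂ hj₂P (Or.inl hplt)
        omega
      rw [hdef]
      rcases hsplit with hcase | hcase
      · calc D.card ≤ (P.filter fun j => R j ≤ m₀).card := by
              apply Finset.card_le_card
              intro j hj
              rw [Finset.mem_filter]
              exact ⟨hDP hj, hcase j hj⟩
          _ ≤ m₀ := hlowcard
          _ ≤ k := hm₀k
      · calc D.card ≤ (P.filter fun j => m₀ < R j).card := by
              apply Finset.card_le_card
              intro j hj
              rw [Finset.mem_filter]
              exact ⟨hDP hj, hcase j hj⟩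
          _ ≤ k := hhighcard
    have hBA : ∀ y : Fin n → Bool, 0 < L y u → B y u < A y u := by
      intro y h
      have h' : (0:ℝ) < max 0 (A y u - B y u) := h
      by_contra hle
      push_neg at hle
      rw [max_eq_left (by linarith)] at h'
      exact lt_irrefl 0 h'
    show (∑ y : Fin n → Bool, (L y u / 4) • (g y - g (cp y)))
      ∈ ghdRealization n k
    unfold ghdRealization
    refine Set.mem_iUnion.2 ⟨x, Set.mem_union_left _ ?_⟩
    unfold ghdSimplex
    set S₀ := Finset.univ.filter (fun y : Fin n → Bool => 0 < L y u) with hS₀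
    have hvanish : ∀ y ∈ (Finset.univ : Finset (Fin n → Bool)), y ∉ S₀ →
        (L y u / 4) • (g y - g (cp y)) = 0 := by
      intro y _ hy
      have h0 : ¬ 0 < L y u := by
        rw [hS₀, Finset.mem_filter] at hy
        intro hc
        exact hy ⟨Finset.mem_univ _, hc⟩
      have hge : 0 ≤ L y u := le_max_left _ _
      have : L y u = 0 := le_antisymm (not_lt.1 h0) hge
      rw [this]
      simp
    have hFsum : (∑ y : Fin n → Bool, (L y u / 4) • (g y - g (cp y)))
        = ∑ y ∈ S₀, (L y u / 2) • ((2⁻¹ : ℝ) • (g y - g (cp y))) := by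
      rw [← Finset.sum_subset (Finset.subset_univ S₀) hvanish]
      apply Finset.sum_congr rfl
      intro y _
      rw [smul_smul]
      congr 1
      ring
    rw [hFsum]
    apply Convex.sum_mem (convex_convexHull ℝ _)
    · intro y _
      exact div_nonneg (le_max_left _ _) (by norm_num)
    · have hrestr : ∑ y ∈ S₀, L y u = ∑ y : Fin n → Bool, L y u := by
        apply Finset.sum_subset (Finset.subset_univ S₀)
        intro y _ hy
        have h0 : ¬ 0 < L y u := by
          rw [hS₀, Finset.mem_filter] at hy
          intro hc
          exact hy ⟨Finset.mem_univ _, hc⟩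
        exact le_antisymm (not_lt.1 h0) (le_max_left _ _)
      rw [← Finset.sum_div, hrestr, hsum2]
      norm_num
    · intro y hy
      rw [hS₀, Finset.mem_filter] at hy
      have hBAy := hBA y hy.2
      have hnear_y := hnear y hBAy
      have hfar_y : n - k ≤ hammingDist x (cp y) := by
        have hc : hammingDist x (cp y) = n - hammingDist x y := GhdAux.hamming_compl x y
        rw [hc]
        exact Nat.sub_le_sub_left hnear_y n
      have h1 : g y ∈
          ({v | ∃ y', hammingDist x y' ≤ k ∧ v = Pi.single y' (1:ℝ)} ∪
           {v | ∃ y', n - k ≤ hammingDist x y' ∧ v = -Pi.single y' (1:ℝ)} :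
            Set ((Fin n → Bool) → ℝ)) := Or.inl ⟨y, hnear_y, by rw [hg]⟩
      have h2 : -(g (cp y)) ∈
          ({v | ∃ y', hammingDist x y' ≤ k ∧ v = Pi.single y' (1:ℝ)} ∪
           {v | ∃ y', n - k ≤ hammingDist x y' ∧ v = -Pi.single y' (1:ℝ)} :
            Set ((Fin n → Bool) → ℝ)) := Or.inr ⟨cp y, hfar_y, by rw [hg]⟩
      have hcvx := convex_convexHull ℝ
        ({v | ∃ y', hammingDist x y' ≤ k ∧ v = Pi.single y' (1:ℝ)} ∪
         {v | ∃ y', n - k ≤ hammingDist x y' ∧ v = -Pi.single y' (1:ℝ)} :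
          Set ((Fin n → Bool) → ℝ))
      have hmem := hcvx (subset_convexHull ℝ _ h1) (subset_convexHull ℝ _ h2)
        (by norm_num : (0:ℝ) ≤ 2⁻¹) (by norm_num : (0:ℝ) ≤ 2⁻¹) (by norm_num)
      have halg : (2⁻¹ : ℝ) • (g y - g (cp y))
          = (2⁻¹ : ℝ) • g y + (2⁻¹ : ℝ) • (-(g (cp y))) := by
        rw [smul_sub, sub_eq_add_neg, ← smul_neg]
      rw [halg]
      exact hmem
  · -- oddness
    intro v _
    have hterm : ∀ y : Fin n → Bool,
        (L y (-v) / 4) • (g y - g (cp y))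
        = (L (cp y) v / 4) • (g y - g (cp y)) := by
      intro y; rw [hLodd]
    show (∑ y : Fin n → Bool, (L y (-v) / 4) • (g y - g (cp y)))
        = -(∑ y : Fin n → Bool, (L y v / 4) • (g y - g (cp y)))
    rw [Finset.sum_congr rfl fun y _ => hterm y]
    have hbij : Function.Bijective cp :=
      Function.Involutive.bijective (fun y => hcpcp y)
    have hswap : (∑ y : Fin n → Bool, (L (cp y) v / 4) • (g y - g (cp y)))
        = ∑ z : Fin n → Bool, (L z v / 4) • (g (cp z) - g z) := by
      apply Fintype.sum_bijective cp hbij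
      intro y
      rw [hcpcp y]
    rw [hswap, ← Finset.sum_neg_distrib]
    apply Finset.sum_congr rfl
    intro y _
    rw [← smul_neg, neg_sub]
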